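/- Let x₁, …, x_D ∈ ℝ^D and define φ : ℝ^D → ℝ^D by φ(y) = (dist(y,x₁), …, dist(y,x_D)). Then φ is differentiable at every y ∉ {x₁,…,x_D}, and the absolute value of the Jacobian determinant of φ at such y equals |det(y − x₁, …, y − x_D)| / ∏_{i=1}^D dist(y, x_i), where det(y − x₁, …, y − x_D) is the determinant of the D×D matrix whose i-th column is y − x_i. -/

import Mathlib

theorem stmt_8 (D : ℕ) (x : Fin D → EuclideanSpace ℝ (Fin D))
    (y : EuclideanSpace ℝ (Fin D)) (hy : y ∉ Set.range x) :
    DifferentiableAt ℝ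
      (fun z : EuclideanSpace ℝ (Fin D) =>
        ((WithLp.equiv 2 (Fin D → ℝ)).symm fun i => dist z (x i))) y ∧
    |LinearMap.det (fderiv ℝ
        (fun z : EuclideanSpace ℝ (Fin D) =>
          ((WithLp.equiv 2 (Fin D → ℝ)).symm fun i => dist z (x i))) y).toLinearMap|
      = |Matrix.det (Matrix.of fun a i : Fin D => (y - x i) a)| / ∏ i, dist y (x i) := by
  classical
  have hne : ∀ i, y - x i ≠ 0 := by
    intro i h
    exact hy ⟨i, (sub_eq_zero.mp h).symm⟩
  have hdpos : ∀ i, 0 < dist y (x i) := fun i =>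
    dist_pos.mpr (fun h => hne i (by rw [h, sub_self]))
  -- candidate derivative
  set F : EuclideanSpace ℝ (Fin D) →L[ℝ] EuclideanSpace ℝ (Fin D) :=
    (EuclideanSpace.equiv (Fin D) ℝ).symm.toContinuousLinearMap.comp
      (ContinuousLinearMap.pi fun i => (dist y (x i))⁻¹ • innerSL ℝ (y - x i)) with hF
  have hder : HasFDerivAt
      (fun z : EuclideanSpace ℝ (Fin D) =>
        ((WithLp.equiv 2 (Fin D → ℝ)).symm fun i => dist z (x i))) F y := by
    have h1 : HasFDerivAt (fun z : EuclideanSpace ℝ (Fin D) => fun i => dist z (x i))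
        (ContinuousLinearMap.pi fun i => (dist y (x i))⁻¹ • innerSL ℝ (y - x i)) y := by
      rw [hasFDerivAt_pi]
      intro i
      have hsq : HasFDerivAt (fun z : EuclideanSpace ℝ (Fin D) => ‖z - x i‖ ^ 2)
          (2 • (innerSL ℝ (y - x i)).comp (ContinuousLinearMap.id ℝ _)) y := by
        simpa using ((hasFDerivAt_id y).sub_const (x i)).norm_sq
      have hsqrt := hsq.sqrt (pow_ne_zero 2 (norm_ne_zero_iff.mpr (hne i)))
      have heq : (fun z : EuclideanSpace ℝ (Fin D) => Real.sqrt (‖z - x i‖ ^ 2))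
          = fun z => dist z (x i) := by
        funext z
        rw [Real.sqrt_sq (norm_nonneg _), dist_eq_norm]
      rw [heq] at hsqrt
      refine hsqrt.congr_fderiv ?_
      ext v
      have hn : ‖y - x i‖ ≠ 0 := norm_ne_zero_iff.mpr (hne i)
      simp [dist_eq_norm, Real.sqrt_sq (norm_nonneg (y - x i)), smul_smul]
      field_simp
    exact ((EuclideanSpace.equiv (Fin D) ℝ).symm.hasFDerivAt).comp y h1
  refine ⟨hder.differentiableAt, ?_⟩
  rw [hder.fderiv]
  have b := (EuclideanSpace.basisFun (Fin D) ℝ).toBasis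
  rw [← LinearMap.det_toMatrix (EuclideanSpace.basisFun (Fin D) ℝ).toBasis]
  have hM : LinearMap.toMatrix (EuclideanSpace.basisFun (Fin D) ℝ).toBasis
      (EuclideanSpace.basisFun (Fin D) ℝ).toBasis F.toLinearMap
      = Matrix.diagonal (fun i => (dist y (x i))⁻¹) *
        Matrix.transpose (Matrix.of fun a i : Fin D => (y - x i) a) := by
    ext i j
    rw [LinearMap.toMatrix_apply]
    simp [hF, Matrix.diagonal_mul, OrthonormalBasis.coe_toBasis_repr_apply,
      EuclideanSpace.basisFun_apply, EuclideanSpace.inner_single_right]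
  rw [hM, Matrix.det_mul, Matrix.det_diagonal, Matrix.det_transpose, abs_mul,
    Finset.abs_prod]
  have h1 : ∏ i, |(dist y (x i))⁻¹| = (∏ i, dist y (x i))⁻¹ := by
    rw [← Finset.prod_inv_distrib]
    exact Finset.prod_congr rfl fun i _ => abs_of_pos (inv_pos.mpr (hdpos i))
  rw [h1, inv_mul_eq_div]
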